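/- arXiv:1802.09049 — 2 statements merged into one kernel-verified Lean document; each statement's English description precedes it below -/
import Mathlib

section
/- Let k ∈ ℕ and let D, D₁, D₂ be digraphs and U, W be vertex sets. Then: (i) for any v ∈ V(D₁ ∪ D₂), if (v,U) is k-connected in D₁ and (u,W) is k-connected in D₂ for every u ∈ U, then (v,W) is k-connected in D₁ ∪ D₂; (ii) for any v ∈ V(D₁ ∪ D₂), if (U,v) is k-connected in D₁ and (W,u) is k-connected in D₂ for every u ∈ U, then (W,v) is k-connected in D₁ ∪ D₂; (iii) if D[W] is a strongly k-connected digraph and both (u,W) and (W,u) are k-connected in D[U ∪ W] for every u ∈ U, then D[U ∪ W] is a strongly k-connected digraph. -/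
/-- A digraph on the vertex type `V`, given by its adjacency (directed edge) relation. -/
structure Digr (V : Type) where
  Adj : V → V → Prop

namespace Digr

variable {V : Type}

/-- No loops. -/
def Loopless (G : Digr V) : Prop := ∀ v, ¬ G.Adj v v

/-- A tournament: every pair of distinct vertices is joined by exactly one directed edge. -/
def IsTournament (G : Digr V) : Prop :=
  G.Loopless ∧ ∀ u v : V, u ≠ v → (G.Adj u v ↔ ¬ G.Adj v u)

/-- A semicomplete digraph: every pair of distinct vertices is joined by at least one
directed edge (edges in both directions are allowed). -/
def IsSemicomplete (G : Digr V) : Prop :=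
  G.Loopless ∧ ∀ u v : V, u ≠ v → (G.Adj u v ∨ G.Adj v u)

/-- Out-neighbourhood `N⁺_G(v)`. -/
def outN (G : Digr V) (v : V) : Set V := {u | G.Adj v u}

/-- In-neighbourhood `N⁻_G(v)`. -/
def inN (G : Digr V) (v : V) : Set V := {u | G.Adj u v}

/-- Union of two digraphs (on the same vertex type). -/
def union (G H : Digr V) : Digr V := ⟨fun a b => G.Adj a b ∨ H.Adj a b⟩

/-- `l` is a directed path of `G` lying inside the vertex set `A`, from `u` to `v`. -/
def IsPathOn (G : Digr V) (A : Set V) (u v : V) (l : List V) : Prop :=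
  l.Nodup ∧ l.Chain' G.Adj ∧ (∀ x ∈ l, x ∈ A) ∧ l.head? = some u ∧ l.getLast? = some v

/-- There is a directed path of `G` inside `A` from `u` to `v`. -/
def Reaches (G : Digr V) (A : Set V) (u v : V) : Prop :=
  ∃ l, G.IsPathOn A u v l

/-- The induced subdigraph of `G` on `W` is strongly `k`-connected: `|W| ≥ k + 1` and for
every ordered pair of distinct vertices of `W` and every `S ⊆ W ∖ {u,v}` with `|S| ≤ k - 1`
there is a directed path from `u` to `v` avoiding `S`. -/
def StronglyConnOn (G : Digr V) (W : Set V) (k : ℕ) : Prop :=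
  k + 1 ≤ W.ncard ∧
  ∀ u ∈ W, ∀ v ∈ W, u ≠ v → ∀ S : Set V, S ⊆ W \ {u, v} → S.ncard < k →
    G.Reaches (W \ S) u v

/-- Strong `c`-connectedness for a real parameter `c` (the condition on the removed set `S`
is `|S| ≤ c - 1`). -/
def StronglyConnOnR (G : Digr V) (W : Set V) (c : ℝ) : Prop :=
  c + 1 ≤ (W.ncard : ℝ) ∧
  ∀ u ∈ W, ∀ v ∈ W, u ≠ v → ∀ S : Set V, S ⊆ W \ {u, v} → (S.ncard : ℝ) ≤ c - 1 →
    G.Reaches (W \ S) u v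

/-- `l` is a directed cycle of `G` (length at least 3) whose vertex set is `C`. -/
def IsCycleOn (G : Digr V) (C : Set V) (l : List V) : Prop :=
  3 ≤ l.length ∧ l.Nodup ∧ (∀ x, x ∈ l ↔ x ∈ C) ∧ l.Chain' G.Adj ∧
  ∃ a b, l.getLast? = some a ∧ l.head? = some b ∧ G.Adj a b

/-- The pair `(v, U)` is `k`-connected in the induced subdigraph of `G` on `A`: after
deleting any `S ⊆ A ∖ {v}` with `|S| ≤ k - 1` there is a path from `v` to some vertex
of `U ∖ S` inside `A ∖ S`. -/
def VtxSetConn (G : Digr V) (A : Set V) (v : V) (U : Set V) (k : ℕ) : Prop :=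
  ∀ S : Set V, S ⊆ A \ {v} → S.ncard < k → ∃ u ∈ U \ S, G.Reaches (A \ S) v u

/-- The pair `(U, v)` is `k`-connected in the induced subdigraph of `G` on `A`. -/
def SetVtxConn (G : Digr V) (A : Set V) (U : Set V) (v : V) (k : ℕ) : Prop :=
  ∀ S : Set V, S ⊆ A \ {v} → S.ncard < k → ∃ u ∈ U \ S, G.Reaches (A \ S) u v

end Digr

open Digr

namespace Digr

variable {V : Type}

lemma rtg_of_walk {G : Digr V} {A : Set V} :
    ∀ (l : List V) (u v : V), l.Chain' G.Adj → (∀ x ∈ l, x ∈ A) →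
      l.head? = some u → l.getLast? = some v →
      u ∈ A ∧ Relation.ReflTransGen (fun a b => G.Adj a b ∧ b ∈ A) u v := by
  intro l
  induction l with
  | nil => intro u v _ _ h; simp at h
  | cons a t ih =>
    intro u v hch hmem hh hl
    simp only [List.head?_cons, Option.some.injEq] at hh
    subst hh
    cases t with
    | nil =>
      simp only [List.getLast?_singleton, Option.some.injEq] at hl
      subst hl
      exact ⟨hmem _ (by simp), Relation.ReflTransGen.refl⟩
    | cons b t' =>
      simp only [List.Chain', List.isChain_cons_cons] at hch
      rw [List.getLast?_cons_cons] at hl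
      obtain ⟨hbA, hrtg⟩ := ih b v hch.2 (fun x hx => hmem x (List.mem_cons_of_mem _ hx))
        rfl hl
      exact ⟨hmem _ (by simp), Relation.ReflTransGen.head ⟨hch.1, hbA⟩ hrtg⟩

lemma rtg_of_reaches {G : Digr V} {A : Set V} {u v : V} (h : G.Reaches A u v) :
    u ∈ A ∧ Relation.ReflTransGen (fun a b => G.Adj a b ∧ b ∈ A) u v := by
  obtain ⟨l, _, hch, hmem, hh, hl⟩ := h
  exact rtg_of_walk l u v hch hmem hh hl

lemma reaches_of_rtg {G : Digr V} {A : Set V} {u v : V} (hu : u ∈ A)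
    (h : Relation.ReflTransGen (fun a b => G.Adj a b ∧ b ∈ A) u v) :
    G.Reaches A u v := by
  revert hu
  induction h using Relation.ReflTransGen.head_induction_on with
  | refl =>
    intro hv
    exact ⟨[v], by simp, List.isChain_singleton _, by simpa using hv, rfl, rfl⟩
  | head hr _ ih =>
    rename_i a c h'
    intro haA
    obtain ⟨l, hnd, hch, hmem, hh, hl⟩ := ih hr.2
    by_cases hal : a ∈ l
    · obtain ⟨s, t, rfl⟩ := List.append_of_mem hal
      refine ⟨a :: t, hnd.sublist (List.sublist_append_right s (a :: t)),
        hch.suffix ⟨s, rfl⟩, fun x hx => hmem x (List.mem_append_right s hx), rfl, ?_⟩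
      rw [List.getLast?_append] at hl
      cases h'' : (a :: t).getLast? with
      | none => simp [List.getLast?_eq_none_iff] at h''
      | some x => rw [h''] at hl; simp only [Option.or] at hl; exact hl
    · refine ⟨a :: l, List.nodup_cons.2 ⟨hal, hnd⟩, List.isChain_cons.2 ⟨?_, hch⟩,
        ?_, rfl, ?_⟩
      · intro y hy
        rw [hh] at hy
        simp at hy
        subst hy
        exact hr.1
      · intro x hx
        rcases List.mem_cons.1 hx with rfl | hx
        · exact haA
        · exact hmem x hx
      · cases l with
        | nil => simp at hh
        | cons b t => rw [List.getLast?_cons_cons]; exact hl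

lemma Reaches.trans {G : Digr V} {A : Set V} {u v w : V} (h1 : G.Reaches A u v)
    (h2 : G.Reaches A v w) : G.Reaches A u w :=
  reaches_of_rtg (rtg_of_reaches h1).1 ((rtg_of_reaches h1).2.trans (rtg_of_reaches h2).2)

lemma Reaches.mono {G G' : Digr V} {A A' : Set V} (hG : ∀ a b, G.Adj a b → G'.Adj a b)
    (hA : A ⊆ A') {u v : V} (h : G.Reaches A u v) : G'.Reaches A' u v := by
  obtain ⟨l, hnd, hch, hmem, hh, hl⟩ := h
  exact ⟨l, hnd, hch.imp fun a b h => hG a b h, fun x hx => hA (hmem x hx), hh, hl⟩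

lemma Reaches.refl {G : Digr V} {A : Set V} {u : V} (hu : u ∈ A) : G.Reaches A u u :=
  ⟨[u], by simp, List.isChain_singleton _, by simpa using hu, rfl, rfl⟩

end Digr


/-- **Lemma 2.3** (gluing lemma). (i) and (ii): composing `k`-connected pairs across a
union of digraphs; (iii): if `D[W]` is strongly `k`-connected and every `u ∈ U` is
`k`-connected to and from `W` in `D[U ∪ W]`, then `D[U ∪ W]` is strongly `k`-connected. -/
theorem stmt6 {V : Type} [Fintype V] (k : ℕ) (D D₁ D₂ : Digr V) (U W : Set V) :
    (∀ v : V, D₁.VtxSetConn Set.univ v U k →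
      (∀ u ∈ U, D₂.VtxSetConn Set.univ u W k) →
      (D₁.union D₂).VtxSetConn Set.univ v W k) ∧
    (∀ v : V, D₁.SetVtxConn Set.univ U v k →
      (∀ u ∈ U, D₂.SetVtxConn Set.univ W u k) →
      (D₁.union D₂).SetVtxConn Set.univ W v k) ∧
    (D.StronglyConnOn W k →
      (∀ u ∈ U, D.VtxSetConn (U ∪ W) u W k ∧ D.SetVtxConn (U ∪ W) W u k) →
      D.StronglyConnOn (U ∪ W) k) := by
  refine ⟨?_, ?_, ?_⟩
  · intro v h1 h2 S hS hk
    obtain ⟨u, hu, hru⟩ := h1 S hS hk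
    obtain ⟨w, hw, hrw⟩ := h2 u hu.1 S
      (fun x hx => ⟨trivial, fun hxu => hu.2 (hxu ▸ hx)⟩) hk
    exact ⟨w, hw, (hru.mono (G' := D₁.union D₂) (fun a b h => Or.inl h) subset_rfl).trans
      (hrw.mono (G' := D₁.union D₂) (fun a b h => Or.inr h) subset_rfl)⟩
  · intro v h1 h2 S hS hk
    obtain ⟨u, hu, hru⟩ := h1 S hS hk
    obtain ⟨w, hw, hrw⟩ := h2 u hu.1 S
      (fun x hx => ⟨trivial, fun hxu => hu.2 (hxu ▸ hx)⟩) hk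
    exact ⟨w, hw, (hrw.mono (G' := D₁.union D₂) (fun a b h => Or.inr h) subset_rfl).trans
      (hru.mono (G' := D₁.union D₂) (fun a b h => Or.inl h) subset_rfl)⟩
  · rintro ⟨hcard, hconn⟩ hUW
    refine ⟨le_trans hcard (Set.ncard_le_ncard Set.subset_union_right (Set.toFinite _)), ?_⟩
    intro u hu v hv huv S hS hk
    have hSprop : ∀ x ∈ S, x ∈ U ∪ W ∧ x ≠ u ∧ x ≠ v := by
      intro x hx
      have := hS hx
      simp only [Set.mem_diff, Set.mem_insert_iff, Set.mem_singleton_iff, not_or] at this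
      exact ⟨this.1, this.2⟩
    have h1 : ∃ w₁ ∈ W \ S, D.Reaches ((U ∪ W) \ S) u w₁ := by
      by_cases huW : u ∈ W
      · exact ⟨u, ⟨huW, fun h => (hSprop u h).2.1 rfl⟩,
          Reaches.refl ⟨hu, fun h => (hSprop u h).2.1 rfl⟩⟩
      · exact (hUW u (hu.resolve_right huW)).1 S
          (fun x hx => ⟨(hSprop x hx).1, (hSprop x hx).2.1⟩) hk
    have h2 : ∃ w₂ ∈ W \ S, D.Reaches ((U ∪ W) \ S) w₂ v := by
      by_cases hvW : v ∈ W
      · exact ⟨v, ⟨hvW, fun h => (hSprop v h).2.2 rfl⟩,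
          Reaches.refl ⟨hv, fun h => (hSprop v h).2.2 rfl⟩⟩
      · exact (hUW v (hv.resolve_right hvW)).2 S
          (fun x hx => ⟨(hSprop x hx).1, (hSprop x hx).2.2⟩) hk
    obtain ⟨w₁, hw₁, hr1⟩ := h1
    obtain ⟨w₂, hw₂, hr2⟩ := h2
    have hmid : D.Reaches ((U ∪ W) \ S) w₁ w₂ := by
      by_cases h12 : w₁ = w₂
      · exact h12 ▸ Reaches.refl ⟨Or.inr hw₁.1, hw₁.2⟩
      · have hsub : S ∩ W ⊆ W \ {w₁, w₂} := by
          intro x hx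
          refine ⟨hx.2, ?_⟩
          simp only [Set.mem_insert_iff, Set.mem_singleton_iff, not_or]
          exact ⟨fun h => hw₁.2 (h ▸ hx.1), fun h => hw₂.2 (h ▸ hx.1)⟩
        have hcard' : (S ∩ W).ncard < k :=
          lt_of_le_of_lt (Set.ncard_le_ncard Set.inter_subset_left (Set.toFinite _)) hk
        have := hconn w₁ hw₁.1 w₂ hw₂.1 h12 (S ∩ W) hsub hcard'
        refine this.mono (fun a b h => h) ?_
        intro x hx
        exact ⟨Or.inr hx.1, fun hxS => hx.2 ⟨hxS, hx.1⟩⟩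
    exact (hr1.trans hmid).trans hr2
end

section
/- Let k, ℓ, q, t ∈ ℕ and let D be a digraph on n vertices with δ(D) ≥ n − ℓ and with minimum out-degree and minimum in-degree both at least qt + |C| + 4k(k+ℓ)t + k, where C ⊆ V(D) is a given set. Let Q₁, …, Q_t ⊆ V(D) ∖ C be pairwise disjoint sets with |Q_i| ≤ q for each i ∈ [t]. Then there exist pairwise disjoint sets Q'₁, …, Q'_t ⊆ V(D) ∖ (C ∪ Q₁ ∪ ⋯ ∪ Q_t) such that for each i ∈ [t]: (i) the sets C, Q₁, …, Q_t, Q'₁, …, Q'_t are pairwise disjoint; (ii) |Q'_i| ≤ 4k(k+ℓ); and (iii) for every u ∈ Q_i ∪ Q'_i, both (u, Q'_i) and (Q'_i, u) are k-connected in D[Q_i ∪ Q'_i]. -/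
open Digr

set_option linter.unusedSectionVars false
set_option linter.unusedVariables false


namespace Digr

variable {V : Type} [Fintype V]

/-- The reverse digraph. -/
def rev (D : Digr V) : Digr V := ⟨fun a b => D.Adj b a⟩

lemma rev_outN (D : Digr V) : D.rev.outN = D.inN := rfl
lemma rev_inN (D : Digr V) : D.rev.inN = D.outN := rfl

lemma isPathOn_mono {D : Digr V} {A B : Set V} (h : A ⊆ B) {u v : V} {l : List V}
    (hp : D.IsPathOn A u v l) : D.IsPathOn B u v l :=
  ⟨hp.1, hp.2.1, fun x hx => h (hp.2.2.1 x hx), hp.2.2.2⟩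

lemma reaches_mono {D : Digr V} {A B : Set V} (h : A ⊆ B) {u v : V} :
    D.Reaches A u v → D.Reaches B u v := fun ⟨l, hl⟩ => ⟨l, isPathOn_mono h hl⟩

lemma reaches_single {D : Digr V} {A : Set V} {u : V} (hu : u ∈ A) : D.Reaches A u u := by
  refine ⟨[u], ?_, ?_, ?_, ?_, ?_⟩ <;> simp [hu, List.Chain']

lemma isPathOn_pair {D : Digr V} {A : Set V} {u y : V} (hadj : D.Adj u y) (hne : u ≠ y)
    (hu : u ∈ A) (hy : y ∈ A) : D.IsPathOn A u y [u, y] := by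
  refine ⟨?_, ?_, ?_, ?_, ?_⟩ <;> simp [hu, hy, hne, hadj, List.Chain']

lemma isPathOn_cons {D : Digr V} {A : Set V} {y v x : V} {l : List V}
    (hl : D.IsPathOn A y v l) (hadj : D.Adj x y) (hx : x ∈ A) (hxl : x ∉ l) :
    D.IsPathOn A x v (x :: l) := by
  obtain ⟨h1, h2, h3, h4, h5⟩ := hl
  refine ⟨List.nodup_cons.mpr ⟨hxl, h1⟩, List.isChain_cons.mpr ⟨?_, h2⟩, ?_, by simp, ?_⟩
  · intro z hz
    rw [h4] at hz
    cases hz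
    exact hadj
  · intro z hz
    rcases List.mem_cons.mp hz with rfl | hz
    exacts [hx, h3 z hz]
  · cases l with
    | nil => simp at h4
    | cons a l' => rw [List.getLast?_cons_cons]; exact h5

lemma exists_mem_not_mem {B S : Set V} {k : ℕ} (hB : k ≤ B.ncard) (hS : S.ncard < k) :
    ∃ y ∈ B, y ∉ S := by
  by_contra h
  push_neg at h
  exact absurd (Set.ncard_le_ncard h (Set.toFinite S)) (by omega)

/-- list whose every element has `k` out-neighbours among the later elements or `T`. -/
def peelOK (D : Digr V) (k : ℕ) (T : Set V) : List V → Prop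
  | [] => True
  | x :: P => (k ≤ (D.outN x ∩ ({y | y ∈ P} ∪ T)).ncard ∧ x ∉ P ∧ x ∉ T) ∧ peelOK D k T P

lemma exists_peel (D : Digr V) (k : ℕ) (R : Set V) :
    ∃ (P : List V) (T : Set V), T ⊆ R ∧ ({y | y ∈ P} ∪ T = R) ∧ peelOK D k T P ∧
      ∀ x ∈ T, (D.outN x ∩ (T \ {x})).ncard < k := by
  generalize hn : R.ncard = n
  induction n using Nat.strong_induction_on generalizing R with
  | _ n IH =>
    by_cases hx : ∃ x ∈ R, k ≤ (D.outN x ∩ (R \ {x})).ncard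
    · obtain ⟨x, hxR, hdeg⟩ := hx
      obtain ⟨P', T, hTR, hPT, hOK, hstuck⟩ := IH ((R \ {x}).ncard)
        (by rw [← hn]; exact Set.ncard_diff_singleton_lt_of_mem hxR) (R \ {x}) rfl
      have hsub : {y | y ∈ P'} ⊆ R \ {x} := by
        rw [← hPT]; exact Set.subset_union_left
      refine ⟨x :: P', T, hTR.trans Set.diff_subset, ?_, ?_, hstuck⟩
      · have : {y | y ∈ x :: P'} = insert x {y | y ∈ P'} := by
          ext z; simp [List.mem_cons]
        rw [this, Set.insert_union, hPT, Set.insert_diff_singleton,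
          Set.insert_eq_self.mpr hxR]
      · refine ⟨⟨by rw [hPT]; exact hdeg, ?_, ?_⟩, hOK⟩
        · intro hmem
          exact (hsub hmem).2 rfl
        · intro hmem
          exact (hTR hmem).2 rfl
    · push_neg at hx
      exact ⟨[], R, subset_rfl, by simp, trivial, hx⟩

lemma stuck_small (D : Digr V) (k ℓ : ℕ) (T : Set V)
    (hnon : ∀ x, (Set.univ \ (D.outN x ∪ D.inN x)).ncard ≤ ℓ)
    (hst : ∀ x ∈ T, (D.outN x ∩ (T \ {x})).ncard < k) :
    T.ncard ≤ 2 * k + ℓ := by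
  classical
  rcases T.eq_empty_or_nonempty with rfl | ⟨x₀, hx₀⟩
  · simp
  have hk : 1 ≤ k := by
    by_contra h
    have := hst x₀ hx₀
    omega
  set c := T.ncard with hc
  by_contra hbig
  push_neg at hbig
  -- Finset versions
  set Tf : Finset V := T.toFinite.toFinset with hTf
  have hTfc : Tf.card = c := by rw [hc, Set.ncard_eq_toFinset_card T T.toFinite]
  have hmemTf : ∀ z, z ∈ Tf ↔ z ∈ T := fun z => Set.Finite.mem_toFinset _
  -- per-vertex: c - 1 ≤ (k-1) + (inN x ∩ (T\{x})).ncard + ℓ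
  have hper : ∀ x ∈ T, c - 1 ≤ (k - 1) + (D.inN x ∩ (T \ {x})).ncard + ℓ := by
    intro x hx
    have hcover : T \ {x} ⊆ (D.outN x ∩ (T \ {x})) ∪ ((D.inN x ∩ (T \ {x})) ∪
        (Set.univ \ (D.outN x ∪ D.inN x))) := by
      intro y hy
      by_cases h1 : y ∈ D.outN x
      · exact Or.inl ⟨h1, hy⟩
      · by_cases h2 : y ∈ D.inN x
        · exact Or.inr (Or.inl ⟨h2, hy⟩)
        · exact Or.inr (Or.inr ⟨trivial, fun hc => hc.elim h1 h2⟩)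
    have h1 := Set.ncard_le_ncard hcover (Set.toFinite _)
    have h2 := Set.ncard_union_le (D.outN x ∩ (T \ {x}))
      ((D.inN x ∩ (T \ {x})) ∪ (Set.univ \ (D.outN x ∪ D.inN x)))
    have h3 := Set.ncard_union_le (D.inN x ∩ (T \ {x})) (Set.univ \ (D.outN x ∪ D.inN x))
    have h4 := hnon x
    have h5 := hst x hx
    have h6 : (T \ {x}).ncard = c - 1 := by
      rw [hc, Set.ncard_diff_singleton_of_mem hx]
    omega
  -- double counting
  have hcard_in : ∀ x, (D.inN x ∩ (T \ {x})).ncard =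
      (Tf.filter (fun y => D.Adj y x ∧ y ≠ x)).card := by
    intro x
    rw [← Set.ncard_coe_finset]
    congr 1
    ext y
    simp only [Finset.coe_filter, Set.mem_setOf_eq, hmemTf, Set.mem_inter_iff,
      Set.mem_diff, Set.mem_singleton_iff]
    constructor
    · rintro ⟨h1, h2, h3⟩; exact ⟨h2, h1, h3⟩
    · rintro ⟨h1, h2, h3⟩; exact ⟨h2, h1, h3⟩
  have hcard_out : ∀ x, (D.outN x ∩ (T \ {x})).ncard =
      (Tf.filter (fun y => D.Adj x y ∧ y ≠ x)).card := by
    intro x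
    rw [← Set.ncard_coe_finset]
    congr 1
    ext y
    simp only [Finset.coe_filter, Set.mem_setOf_eq, hmemTf, Set.mem_inter_iff,
      Set.mem_diff, Set.mem_singleton_iff]
    constructor
    · rintro ⟨h1, h2, h3⟩; exact ⟨h2, h1, h3⟩
    · rintro ⟨h1, h2, h3⟩; exact ⟨h2, h1, h3⟩
  have hswap : (∑ x ∈ Tf, (Tf.filter (fun y => D.Adj y x ∧ y ≠ x)).card) =
      ∑ y ∈ Tf, (Tf.filter (fun x => D.Adj y x ∧ x ≠ y)).card := by
    simp only [Finset.card_filter]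
    rw [Finset.sum_comm]
    apply Finset.sum_congr rfl
    intro y _
    apply Finset.sum_congr rfl
    intro x _
    congr 1
    simp only [eq_iff_iff]
    constructor
    · rintro ⟨h1, h2⟩; exact ⟨h1, fun h => h2 h.symm⟩
    · rintro ⟨h1, h2⟩; exact ⟨h1, fun h => h2 h.symm⟩
  have hsum_in : (∑ x ∈ Tf, (Tf.filter (fun y => D.Adj y x ∧ y ≠ x)).card) ≤ c * (k - 1) := by
    rw [hswap]
    calc (∑ y ∈ Tf, (Tf.filter (fun x => D.Adj y x ∧ x ≠ y)).card)
        ≤ ∑ _y ∈ Tf, (k - 1) := by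
          apply Finset.sum_le_sum
          intro y hy
          have h1 := hst y ((hmemTf y).mp hy)
          have h2 := hcard_out y
          omega
      _ = c * (k - 1) := by rw [Finset.sum_const, smul_eq_mul, hTfc]
  have hsum_lower : c * (c - 1) ≤
      ∑ x ∈ Tf, ((k - 1) + (Tf.filter (fun y => D.Adj y x ∧ y ≠ x)).card + ℓ) := by
    calc c * (c - 1) = ∑ _x ∈ Tf, (c - 1) := by rw [Finset.sum_const, smul_eq_mul, hTfc]
      _ ≤ _ := by
          apply Finset.sum_le_sum
          intro x hx
          have h1 := hper x ((hmemTf x).mp hx)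
          have h2 := hcard_in x
          omega
  have hsum_upper : (∑ x ∈ Tf, ((k - 1) + (Tf.filter (fun y => D.Adj y x ∧ y ≠ x)).card + ℓ))
      ≤ c * (k - 1) + c * (k - 1) + c * ℓ := by
    rw [Finset.sum_add_distrib, Finset.sum_add_distrib, Finset.sum_const, Finset.sum_const,
      smul_eq_mul, smul_eq_mul, hTfc]
    have := hsum_in
    omega
  have hfinal : c * (c - 1) ≤ c * ((k - 1) + (k - 1) + ℓ) := by
    have : c * ((k - 1) + (k - 1) + ℓ) = c * (k - 1) + c * (k - 1) + c * ℓ := by ring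
    omega
  have hcpos : 0 < c := by
    rw [hc]
    exact (Set.ncard_pos (Set.toFinite T)).mpr ⟨x₀, hx₀⟩
  have hfin2 := Nat.le_of_mul_le_mul_left hfinal hcpos
  omega

end Digr

namespace Digr

variable {V : Type} [Fintype V]

lemma walk_out (D : Digr V) (k : ℕ) (T O : Set V)
    (hTO : ∀ x ∈ T, k ≤ (D.outN x ∩ O).ncard)
    (hTnO : ∀ x ∈ T, x ∉ O) :
    ∀ (P : List V), peelOK D k T P → (∀ x ∈ P, x ∉ O) →
      ∀ S : Set V, S.ncard < k → ∀ u, u ∈ ({y | y ∈ P} ∪ T ∪ O) → u ∉ S →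
        ∃ y ∈ O \ S, D.Reaches (({y | y ∈ P} ∪ T ∪ O) \ S) u y := by
  intro P
  induction P with
  | nil =>
    intro _ _ S hS u hu huS
    have hu' : u ∈ T ∨ u ∈ O := by
      rcases hu with (h | h) | h
      · simp at h
      · exact Or.inl h
      · exact Or.inr h
    rcases hu' with hu' | hu'
    · obtain ⟨y, hyB, hyS⟩ := exists_mem_not_mem (hTO u hu') hS
      refine ⟨y, ⟨hyB.2, hyS⟩, [u, y], isPathOn_pair hyB.1 ?_ ?_ ?_⟩
      · rintro rfl; exact hTnO u hu' hyB.2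
      · exact ⟨Or.inl (Or.inr hu'), huS⟩
      · exact ⟨Or.inr hyB.2, hyS⟩
    · exact ⟨u, ⟨hu', huS⟩, reaches_single ⟨Or.inr hu', huS⟩⟩
  | cons x P' IH =>
    intro hOK hPO S hS u hu huS
    simp only [peelOK] at hOK
    obtain ⟨⟨hdeg, hxP', hxT⟩, hOK'⟩ := hOK
    have hxO : x ∉ O := hPO x (List.mem_cons_self)
    have hsubA : ({y | y ∈ P'} ∪ T ∪ O) ⊆ ({y | y ∈ x :: P'} ∪ T ∪ O) := by
      intro z hz
      rcases hz with (h | h) | h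
      · exact Or.inl (Or.inl (List.mem_cons_of_mem x h))
      · exact Or.inl (Or.inr h)
      · exact Or.inr h
    by_cases hux : u = x
    · subst hux
      obtain ⟨y', hy'B, hy'S⟩ := exists_mem_not_mem hdeg hS
      have hy'mem : y' ∈ {y | y ∈ P'} ∪ T ∪ O := Or.inl hy'B.2
      obtain ⟨y, hy, l, hl⟩ := IH hOK' (fun z hz => hPO z (List.mem_cons_of_mem _ hz))
        S hS y' hy'mem hy'S
      refine ⟨y, hy, u :: l, isPathOn_cons (isPathOn_mono (Set.diff_subset_diff_left hsubA) hl)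
        hy'B.1 ⟨Or.inl (Or.inl (by simp)), huS⟩ ?_⟩
      intro hxl
      have := hl.2.2.1 u hxl
      rcases this.1 with (h | h) | h
      · exact hxP' h
      · exact hxT h
      · exact hxO h
    · have hu' : u ∈ {y | y ∈ P'} ∪ T ∪ O := by
        rcases hu with (h | h) | h
        · rcases List.mem_cons.mp h with h | h
          · exact absurd h hux
          · exact Or.inl (Or.inl h)
        · exact Or.inl (Or.inr h)
        · exact Or.inr h
      obtain ⟨y, hy, hr⟩ := IH hOK' (fun z hz => hPO z (List.mem_cons_of_mem _ hz))
        S hS u hu' huS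
      exact ⟨y, hy, reaches_mono (Set.diff_subset_diff_left hsubA) hr⟩

lemma reaches_of_rev {D : Digr V} {A : Set V} {u v : V} (h : D.rev.Reaches A u v) :
    D.Reaches A v u := by
  obtain ⟨l, h1, h2, h3, h4, h5⟩ := h
  refine ⟨l.reverse, by simpa using h1, ?_, ?_, ?_, ?_⟩
  · rw [List.Chain', List.isChain_reverse]
    exact h2
  · intro x hx
    exact h3 x (List.mem_reverse.mp hx)
  · rw [List.head?_reverse]
    exact h5
  · rw [List.getLast?_reverse]
    exact h4

lemma exists_finset_subset {B : Set V} {k : ℕ} (h : k ≤ B.ncard) :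
    ∃ F : Finset V, ↑F ⊆ B ∧ F.card = k := by
  classical
  obtain ⟨F, hF1, hF2⟩ := Finset.exists_subset_card_eq
    (show k ≤ (Set.toFinite B).toFinset.card by
      rwa [← Set.ncard_eq_toFinset_card B (Set.toFinite B)])
  refine ⟨F, ?_, hF2⟩
  intro x hx
  have := hF1 hx
  rwa [Set.Finite.mem_toFinset] at this

lemma core (D : Digr V) (k ℓ : ℕ) (Q₀ U : Set V) (hQU : Q₀ ⊆ U)
    (hnon : ∀ v, (Set.univ \ (D.outN v ∪ D.inN v)).ncard ≤ ℓ)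
    (hbout : ∀ v, U.ncard + k ≤ (D.outN v).ncard)
    (hbin : ∀ v, U.ncard + k ≤ (D.inN v).ncard) :
    ∃ O : Set V, O ⊆ Set.univ \ U ∧ O.ncard ≤ 4 * k * (k + ℓ) ∧
      ∀ u ∈ Q₀ ∪ O, D.VtxSetConn (Q₀ ∪ O) u O k ∧ D.SetVtxConn (Q₀ ∪ O) O u k := by
  classical
  rcases Nat.eq_zero_or_pos k with rfl | hk
  · exact ⟨∅, by simp, by simp,
      fun u _ => ⟨fun S _ h => absurd h (by omega), fun S _ h => absurd h (by omega)⟩⟩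
  obtain ⟨P₁, T₁, hT₁R, hPT₁, hOK₁, hstuck₁⟩ := exists_peel D k Q₀
  obtain ⟨P₂, T₂, hT₂R, hPT₂, hOK₂, hstuck₂⟩ := exists_peel D.rev k Q₀
  have hnon' : ∀ v, (Set.univ \ (D.rev.outN v ∪ D.rev.inN v)).ncard ≤ ℓ := by
    intro v
    rw [rev_outN, rev_inN, Set.union_comm]
    exact hnon v
  -- allocations
  have hpick₁ : ∀ x : V, ∃ F : Finset V, ↑F ⊆ D.outN x \ U ∧ F.card = k := by
    intro x
    apply exists_finset_subset
    have h1 := hbout x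
    have h2 := Set.ncard_le_ncard_diff_add_ncard (D.outN x) U
    omega
  have hpick₂ : ∀ x : V, ∃ F : Finset V, ↑F ⊆ D.inN x \ U ∧ F.card = k := by
    intro x
    apply exists_finset_subset
    have h1 := hbin x
    have h2 := Set.ncard_le_ncard_diff_add_ncard (D.inN x) U
    omega
  choose f₁ hf₁ hf₁c using hpick₁
  choose f₂ hf₂ hf₂c using hpick₂
  set Of : Finset V := (T₁.toFinite.toFinset.biUnion f₁) ∪ (T₂.toFinite.toFinset.biUnion f₂)
    with hOf
  set O : Set V := ↑Of with hO
  have hOU : O ⊆ Set.univ \ U := by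
    intro z hz
    rw [hO, hOf] at hz
    simp only [Finset.coe_union, Set.mem_union, Finset.coe_biUnion, Set.mem_iUnion,
      Set.Finite.mem_toFinset] at hz
    rcases hz with ⟨x, _, hx⟩ | ⟨x, _, hx⟩
    · exact ⟨trivial, (hf₁ x hx).2⟩
    · exact ⟨trivial, (hf₂ x hx).2⟩
  have hQO : ∀ z ∈ Q₀, z ∉ O := fun z hz hzO => (hOU hzO).2 (hQU hz)
  -- size
  have hsize : O.ncard ≤ 4 * k * (k + ℓ) := by
    have h1 : T₁.ncard ≤ 2 * k + ℓ := stuck_small D k ℓ T₁ hnon hstuck₁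
    have h2 : T₂.ncard ≤ 2 * k + ℓ := stuck_small D.rev k ℓ T₂ hnon' hstuck₂
    have hb1 : (T₁.toFinite.toFinset.biUnion f₁).card ≤ T₁.ncard * k := by
      calc (T₁.toFinite.toFinset.biUnion f₁).card ≤ ∑ x ∈ T₁.toFinite.toFinset, (f₁ x).card :=
            Finset.card_biUnion_le
        _ = ∑ _x ∈ T₁.toFinite.toFinset, k := by
            apply Finset.sum_congr rfl; intro x _; exact hf₁c x
        _ = T₁.ncard * k := by
            rw [Finset.sum_const, smul_eq_mul, ← Set.ncard_eq_toFinset_card T₁ T₁.toFinite]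
    have hb2 : (T₂.toFinite.toFinset.biUnion f₂).card ≤ T₂.ncard * k := by
      calc (T₂.toFinite.toFinset.biUnion f₂).card ≤ ∑ x ∈ T₂.toFinite.toFinset, (f₂ x).card :=
            Finset.card_biUnion_le
        _ = ∑ _x ∈ T₂.toFinite.toFinset, k := by
            apply Finset.sum_congr rfl; intro x _; exact hf₂c x
        _ = T₂.ncard * k := by
            rw [Finset.sum_const, smul_eq_mul, ← Set.ncard_eq_toFinset_card T₂ T₂.toFinite]
    have hcard : O.ncard ≤ (2 * k + ℓ) * k + (2 * k + ℓ) * k := by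
      rw [hO, Set.ncard_coe_finset, hOf]
      have := Finset.card_union_le (T₁.toFinite.toFinset.biUnion f₁)
        (T₂.toFinite.toFinset.biUnion f₂)
      have m1 : T₁.ncard * k ≤ (2 * k + ℓ) * k := Nat.mul_le_mul_right k h1
      have m2 : T₂.ncard * k ≤ (2 * k + ℓ) * k := Nat.mul_le_mul_right k h2
      omega
    calc O.ncard ≤ (2 * k + ℓ) * k + (2 * k + ℓ) * k := hcard
      _ ≤ 4 * k * (k + ℓ) := by nlinarith
  refine ⟨O, hOU, hsize, ?_⟩
  -- connectivity hypotheses for the two walks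
  have hTO₁ : ∀ x ∈ T₁, k ≤ (D.outN x ∩ O).ncard := by
    intro x hx
    have hsub : ↑(f₁ x) ⊆ D.outN x ∩ O := by
      intro z hz
      refine ⟨(hf₁ x hz).1, ?_⟩
      rw [hO]
      exact Finset.mem_coe.mpr (Finset.mem_union_left _
        (Finset.mem_biUnion.mpr ⟨x, T₁.toFinite.mem_toFinset.mpr hx, Finset.mem_coe.mp hz⟩))
    calc k = (f₁ x).card := (hf₁c x).symm
      _ = (↑(f₁ x) : Set V).ncard := (Set.ncard_coe_finset _).symm
      _ ≤ _ := Set.ncard_le_ncard hsub (Set.toFinite _)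
  have hTO₂ : ∀ x ∈ T₂, k ≤ (D.rev.outN x ∩ O).ncard := by
    intro x hx
    have hsub : ↑(f₂ x) ⊆ D.rev.outN x ∩ O := by
      intro z hz
      refine ⟨(hf₂ x hz).1, ?_⟩
      rw [hO]
      exact Finset.mem_coe.mpr (Finset.mem_union_right _
        (Finset.mem_biUnion.mpr ⟨x, T₂.toFinite.mem_toFinset.mpr hx, Finset.mem_coe.mp hz⟩))
    calc k = (f₂ x).card := (hf₂c x).symm
      _ = (↑(f₂ x) : Set V).ncard := (Set.ncard_coe_finset _).symm
      _ ≤ _ := Set.ncard_le_ncard hsub (Set.toFinite _)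
  have hP₁Q : {y | y ∈ P₁} ⊆ Q₀ := by rw [← hPT₁]; exact Set.subset_union_left
  have hP₂Q : {y | y ∈ P₂} ⊆ Q₀ := by rw [← hPT₂]; exact Set.subset_union_left
  have hset₁ : ({y | y ∈ P₁} ∪ T₁ ∪ O) = Q₀ ∪ O := by rw [hPT₁]
  have hset₂ : ({y | y ∈ P₂} ∪ T₂ ∪ O) = Q₀ ∪ O := by rw [hPT₂]
  intro u hu
  constructor
  · intro S hSsub hSk
    have huS : u ∉ S := fun h => (hSsub h).2 rfl
    have := walk_out D k T₁ O hTO₁ (fun x hx => hQO x (hT₁R hx)) P₁ hOK₁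
      (fun x hx => hQO x (hP₁Q hx)) S hSk u (by rw [hset₁]; exact hu) huS
    rw [hset₁] at this
    exact this
  · intro S hSsub hSk
    have huS : u ∉ S := fun h => (hSsub h).2 rfl
    obtain ⟨y, hy, hr⟩ := walk_out D.rev k T₂ O hTO₂ (fun x hx => hQO x (hT₂R hx)) P₂ hOK₂
      (fun x hx => hQO x (hP₂Q hx)) S hSk u (by rw [hset₂]; exact hu) huS
    rw [hset₂] at hr
    exact ⟨y, hy, reaches_of_rev hr⟩

end Digr


/-- **Claim 3.1.** Given a digraph `D` on `n` vertices with `δ(D) ≥ n - ℓ`, minimum out-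
and in-degree at least `qt + |C| + 4k(k+ℓ)t + k`, a set `C`, and pairwise disjoint sets
`Q₁,…,Q_t ⊆ V(D) ∖ C` with `|Q_i| ≤ q`, there exist pairwise disjoint sets
`Q'₁,…,Q'_t ⊆ V(D) ∖ (C ∪ ⋃ Q_j)` with `|Q'_i| ≤ 4k(k+ℓ)` such that for every
`u ∈ Q_i ∪ Q'_i`, both `(u, Q'_i)` and `(Q'_i, u)` are `k`-connected in
`D[Q_i ∪ Q'_i]`. -/
theorem stmt11 {V : Type} [Fintype V] (k ℓ q t n : ℕ)
    (D : Digr V) (hn : Fintype.card V = n) (C : Set V)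
    (hδ : ∀ v, n - ℓ ≤ (D.outN v ∪ D.inN v).ncard)
    (hout : ∀ v, q * t + C.ncard + 4 * k * (k + ℓ) * t + k ≤ (D.outN v).ncard)
    (hin : ∀ v, q * t + C.ncard + 4 * k * (k + ℓ) * t + k ≤ (D.inN v).ncard)
    (Q : Fin t → Set V) (hQC : ∀ i, Q i ⊆ Set.univ \ C)
    (hQdisj : ∀ i j, i ≠ j → Disjoint (Q i) (Q j))
    (hQq : ∀ i, (Q i).ncard ≤ q) :
    ∃ Q' : Fin t → Set V,
      (∀ i, Q' i ⊆ Set.univ \ (C ∪ ⋃ j, Q j)) ∧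
      -- (i) C, Q₁,…,Q_t, Q'₁,…,Q'_t are pairwise disjoint
      (∀ i, Disjoint (Q' i) C) ∧
      (∀ i j, Disjoint (Q' i) (Q j)) ∧
      (∀ i j, i ≠ j → Disjoint (Q' i) (Q' j)) ∧
      -- (ii)
      (∀ i, (Q' i).ncard ≤ 4 * k * (k + ℓ)) ∧
      -- (iii)
      (∀ i, ∀ u ∈ Q i ∪ Q' i,
        D.VtxSetConn (Q i ∪ Q' i) u (Q' i) k ∧
        D.SetVtxConn (Q i ∪ Q' i) (Q' i) u k) := by
  classical
  have hnon : ∀ v, (Set.univ \ (D.outN v ∪ D.inN v)).ncard ≤ ℓ := by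
    intro v
    have h1 : (Set.univ \ (D.outN v ∪ D.inN v)).ncard
        = (Set.univ : Set V).ncard - (D.outN v ∪ D.inN v).ncard :=
      Set.ncard_diff (Set.subset_univ _)
    have h2 : (Set.univ : Set V).ncard = n := by
      rw [Set.ncard_univ, Nat.card_eq_fintype_card, hn]
    have h3 := hδ v
    have h4 : (D.outN v ∪ D.inN v).ncard ≤ n := by
      rw [← h2]
      exact Set.ncard_le_ncard (Set.subset_univ _) (Set.toFinite _)
    omega
  have hQall : (⋃ j, Q j).ncard ≤ q * t := by
    have h : ∀ s : Finset (Fin t), (⋃ j ∈ s, Q j).ncard ≤ q * s.card := by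
      intro s
      induction s using Finset.induction_on with
      | empty => simp
      | @insert a s ha IH =>
        rw [Finset.set_biUnion_insert, Finset.card_insert_of_notMem ha]
        have e1 := Set.ncard_union_le (Q a) (⋃ j ∈ s, Q j)
        have e2 := hQq a
        have e3 : q * (s.card + 1) = q * s.card + q := by ring
        omega
    have h2 := h Finset.univ
    have h3 : (⋃ j ∈ (Finset.univ : Finset (Fin t)), Q j) = ⋃ j, Q j := by
      ext z; simp
    rw [h3, Finset.card_univ, Fintype.card_fin] at h2
    exact h2
  have main : ∀ m : ℕ, m ≤ t → ∃ Q' : Fin t → Set V,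
      (∀ i, Q' i ⊆ Set.univ \ (C ∪ ⋃ j, Q j)) ∧
      (∀ i j, i ≠ j → Disjoint (Q' i) (Q' j)) ∧
      (∀ i, (Q' i).ncard ≤ 4 * k * (k + ℓ)) ∧
      (⋃ i, Q' i).ncard ≤ 4 * k * (k + ℓ) * m ∧
      (∀ i : Fin t, i.val < m → ∀ u ∈ Q i ∪ Q' i,
        D.VtxSetConn (Q i ∪ Q' i) u (Q' i) k ∧ D.SetVtxConn (Q i ∪ Q' i) (Q' i) u k) := by
    intro m
    induction m with
    | zero =>
      intro _
      refine ⟨fun _ => ∅, by simp, by simp, by simp, by simp, ?_⟩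
      intro i h
      exact absurd h (Nat.not_lt_zero _)
    | succ m IH =>
      intro hm
      obtain ⟨Q', h1, h2, h3, h4, h5⟩ := IH (by omega)
      have hmt : m < t := hm
      set i₀ : Fin t := ⟨m, hmt⟩ with hi₀
      set U : Set V := (C ∪ ⋃ j, Q j) ∪ ⋃ i, Q' i with hU
      have hUcard : U.ncard ≤ C.ncard + q * t + 4 * k * (k + ℓ) * m := by
        have e0 : U.ncard = ((C ∪ ⋃ j, Q j) ∪ ⋃ i, Q' i).ncard := by rw [hU]
        have e1 := Set.ncard_union_le (C ∪ ⋃ j, Q j) (⋃ i, Q' i)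
        have e2 := Set.ncard_union_le C (⋃ j, Q j)
        omega
      have hmul : 4 * k * (k + ℓ) * m ≤ 4 * k * (k + ℓ) * t :=
        Nat.mul_le_mul_left _ (by omega)
      have hUb : ∀ v, U.ncard + k ≤ (D.outN v).ncard := by
        intro v
        have := hout v
        omega
      have hUb' : ∀ v, U.ncard + k ≤ (D.inN v).ncard := by
        intro v
        have := hin v
        omega
      have hQ₀U : Q i₀ ⊆ U := fun z hz => Or.inl (Or.inr (Set.mem_iUnion.mpr ⟨i₀, hz⟩))
      obtain ⟨O, hO1, hO2, hO3⟩ := Digr.core D k ℓ (Q i₀) U hQ₀U hnon hUb hUb'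
      have hOU : ∀ z ∈ O, z ∉ U := fun z hz => (hO1 hz).2
      refine ⟨Function.update Q' i₀ O, ?_, ?_, ?_, ?_, ?_⟩
      · intro i
        by_cases hii : i = i₀
        · subst hii
          rw [Function.update_self]
          intro z hz
          exact ⟨trivial, fun hc => hOU z hz (Or.inl hc)⟩
        · rw [Function.update_of_ne hii]
          exact h1 i
      · intro i j hij
        by_cases hii : i = i₀
        · subst hii
          rw [Function.update_self, Function.update_of_ne (Ne.symm hij)]
          exact Set.disjoint_left.mpr fun z hz hzj =>
            hOU z hz (Or.inr (Set.mem_iUnion.mpr ⟨j, hzj⟩))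
        · rw [Function.update_of_ne hii]
          by_cases hjj : j = i₀
          · subst hjj
            rw [Function.update_self]
            exact Set.disjoint_right.mpr fun z hz hzj =>
              hOU z hz (Or.inr (Set.mem_iUnion.mpr ⟨i, hzj⟩))
          · rw [Function.update_of_ne hjj]
            exact h2 i j hij
      · intro i
        by_cases hii : i = i₀
        · subst hii
          rw [Function.update_self]
          exact hO2
        · rw [Function.update_of_ne hii]
          exact h3 i
      · have hsub : (⋃ i, Function.update Q' i₀ O i) ⊆ (⋃ i, Q' i) ∪ O := by
          intro z hz
          obtain ⟨i, hzs⟩ := Set.mem_iUnion.mp hz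
          by_cases hii : i = i₀
          · subst hii
            rw [Function.update_self] at hzs
            exact Or.inr hzs
          · rw [Function.update_of_ne hii] at hzs
            exact Or.inl (Set.mem_iUnion.mpr ⟨i, hzs⟩)
        have e1 := Set.ncard_le_ncard hsub (Set.toFinite _)
        have e2 := Set.ncard_union_le (⋃ i, Q' i) O
        have e3 : 4 * k * (k + ℓ) * (m + 1) = 4 * k * (k + ℓ) * m + 4 * k * (k + ℓ) := by
          ring
        omega
      · intro i hi u hu
        by_cases hii : i = i₀
        · subst hii
          rw [Function.update_self] at hu ⊢
          exact hO3 u hu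
        · have hilt : i.val < m := by
            have : i.val ≠ m := fun h => hii (Fin.ext h)
            omega
          rw [Function.update_of_ne hii] at hu ⊢
          exact h5 i hilt u hu
  obtain ⟨Q', h1, h2, h3, h4, h5⟩ := main t le_rfl
  refine ⟨Q', h1, ?_, ?_, h2, h3, fun i => h5 i i.isLt⟩
  · intro i
    exact Set.disjoint_left.mpr fun z hz hzC => ((h1 i) hz).2 (Or.inl hzC)
  · intro i j
    exact Set.disjoint_left.mpr fun z hz hzj =>
      ((h1 i) hz).2 (Or.inr (Set.mem_iUnion.mpr ⟨j, hzj⟩))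
end
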